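/- arXiv:0710.4784 — 2 statements merged into one kernel-verified Lean document; each statement's English description precedes it below -/
import Mathlib

section
/- Every linear fourth-order ordinary differential equation can be locally brought to Laguerre form, in which the two terms of orders next below the highest are absent: let c0, c1, c2, c3 be smooth real functions on an open interval I. Then for each x0 ∈ I there exist an open subinterval I0 ∋ x0, smooth functions φ and μ on I0 with φ' > 0 and μ nonvanishing, and smooth functions α, β, such that whenever y is a solution of y'''' + c3·y''' + c2·y'' + c1·y' + c0·y = 0 on I0, the function u defined by u(φ(x)) = μ(x)·y(x) satisfies u''''(t) + α(t)·u'(t) + β(t)·u(t) = 0. -/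
open Set

lemma iterDW_eq {s : Set ℝ} (hs : IsOpen s) {f : ℝ → ℝ} (n : ℕ) {x : ℝ} (hx : x ∈ s) :
    iteratedDerivWithin n f s x = iteratedDeriv n f x := by
  rw [iteratedDerivWithin_eq_iteratedFDerivWithin, iteratedDeriv_eq_iteratedFDeriv,
    iteratedFDerivWithin_of_isOpen n hs hx]

lemma diffAt_iteratedDeriv {s : Set ℝ} (hs : IsOpen s) {f : ℝ → ℝ} {n : WithTop ℕ∞} {k : ℕ}
    (hf : ContDiffOn ℝ n f s) (hk : (k : WithTop ℕ∞) < n) {x : ℝ} (hx : x ∈ s) :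
    DifferentiableAt ℝ (iteratedDeriv k f) x := by
  have h1 := (hf.differentiableOn_iteratedDerivWithin hk hs.uniqueDiffOn) x hx
  have h2 : DifferentiableAt ℝ (iteratedDerivWithin k f s) x :=
    h1.differentiableAt (hs.mem_nhds hx)
  exact h2.congr_of_eventuallyEq <|
    Filter.eventuallyEq_of_mem (hs.mem_nhds hx) fun y hy => (iterDW_eq hs k hy).symm

lemma hasDerivAt_iteratedDeriv {s : Set ℝ} (hs : IsOpen s) {f : ℝ → ℝ} {n : WithTop ℕ∞} {k : ℕ}
    (hf : ContDiffOn ℝ n f s) (hk : (k : WithTop ℕ∞) < n) {x : ℝ} (hx : x ∈ s) :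
    HasDerivAt (iteratedDeriv k f) (iteratedDeriv (k+1) f x) x := by
  rw [iteratedDeriv_succ]
  exact (diffAt_iteratedDeriv hs hf hk hx).hasDerivAt

lemma natCast_lt_infty (k : ℕ) : (k : WithTop ℕ∞) < ((⊤ : ℕ∞) : WithTop ℕ∞) := by
  exact_mod_cast ENat.coe_lt_top k


/-- chain rule identities up to order 4 -/
lemma chain4 {J W : Set ℝ} (hJ : IsOpen J) (hW : IsOpen W) {φ u : ℝ → ℝ}
    (hφ : ContDiffOn ℝ ((⊤ : ℕ∞) : WithTop ℕ∞) φ J) (hu : ContDiffOn ℝ 4 u W)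
    (hm : ∀ x ∈ J, φ x ∈ W) :
    ∀ x ∈ J,
      iteratedDeriv 1 (u ∘ φ) x = iteratedDeriv 1 u (φ x) * iteratedDeriv 1 φ x ∧
      iteratedDeriv 2 (u ∘ φ) x = iteratedDeriv 2 u (φ x) * (iteratedDeriv 1 φ x)^2
        + iteratedDeriv 1 u (φ x) * iteratedDeriv 2 φ x ∧
      iteratedDeriv 3 (u ∘ φ) x = iteratedDeriv 3 u (φ x) * (iteratedDeriv 1 φ x)^3
        + 3 * iteratedDeriv 2 u (φ x) * iteratedDeriv 1 φ x * iteratedDeriv 2 φ x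
        + iteratedDeriv 1 u (φ x) * iteratedDeriv 3 φ x ∧
      iteratedDeriv 4 (u ∘ φ) x = iteratedDeriv 4 u (φ x) * (iteratedDeriv 1 φ x)^4
        + 6 * iteratedDeriv 3 u (φ x) * (iteratedDeriv 1 φ x)^2 * iteratedDeriv 2 φ x
        + iteratedDeriv 2 u (φ x) * (4 * iteratedDeriv 1 φ x * iteratedDeriv 3 φ x
            + 3 * (iteratedDeriv 2 φ x)^2)
        + iteratedDeriv 1 u (φ x) * iteratedDeriv 4 φ x := by
  have hu' : ContDiffOn ℝ ((4:ℕ) : WithTop ℕ∞) u W := by exact_mod_cast hu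
  have hP : ∀ (k : ℕ), ∀ x ∈ J,
      HasDerivAt (iteratedDeriv k φ) (iteratedDeriv (k+1) φ x) x := fun k x hx =>
    hasDerivAt_iteratedDeriv hJ hφ (natCast_lt_infty k) hx
  have hφD : ∀ x ∈ J, HasDerivAt φ (iteratedDeriv 1 φ x) x := by
    intro x hx; have := hP 0 x hx; rwa [iteratedDeriv_zero] at this
  have hU : ∀ (k : ℕ), k < 4 → ∀ x ∈ J,
      HasDerivAt (fun x => iteratedDeriv k u (φ x))
        (iteratedDeriv (k+1) u (φ x) * iteratedDeriv 1 φ x) x := by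
    intro k hk x hx
    exact (hasDerivAt_iteratedDeriv hW hu' (by exact_mod_cast hk) (hm x hx)).comp x (hφD x hx)
  have hU0 : ∀ x ∈ J, HasDerivAt (u ∘ φ) (iteratedDeriv 1 u (φ x) * iteratedDeriv 1 φ x) x := by
    intro x hx; have := hU 0 (by norm_num) x hx; rwa [iteratedDeriv_zero] at this
  -- order 1
  have E1 : ∀ x ∈ J, iteratedDeriv 1 (u ∘ φ) x
      = iteratedDeriv 1 u (φ x) * iteratedDeriv 1 φ x := by
    intro x hx; rw [iteratedDeriv_one]; exact (hU0 x hx).deriv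
  -- order 2
  have hg1 : ∀ x ∈ J, HasDerivAt (fun x => iteratedDeriv 1 u (φ x) * iteratedDeriv 1 φ x)
      (iteratedDeriv 2 u (φ x) * (iteratedDeriv 1 φ x)^2
        + iteratedDeriv 1 u (φ x) * iteratedDeriv 2 φ x) x := by
    intro x hx
    have := (hU 1 (by norm_num) x hx).mul (hP 1 x hx)
    exact this.congr_deriv (by ring)
  have E2 : ∀ x ∈ J, iteratedDeriv 2 (u ∘ φ) x
      = iteratedDeriv 2 u (φ x) * (iteratedDeriv 1 φ x)^2
        + iteratedDeriv 1 u (φ x) * iteratedDeriv 2 φ x := by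
    intro x hx
    rw [show iteratedDeriv 2 (u ∘ φ) x = deriv (iteratedDeriv 1 (u ∘ φ)) x from
      congrFun iteratedDeriv_succ x]
    have heq : deriv (iteratedDeriv 1 (u ∘ φ)) x
        = deriv (fun x => iteratedDeriv 1 u (φ x) * iteratedDeriv 1 φ x) x := by
      apply Filter.EventuallyEq.deriv_eq
      exact Filter.eventuallyEq_of_mem (hJ.mem_nhds hx) fun y hy => E1 y hy
    rw [heq, (hg1 x hx).deriv]
  -- order 3
  have hg2 : ∀ x ∈ J, HasDerivAt (fun x => iteratedDeriv 2 u (φ x) * (iteratedDeriv 1 φ x)^2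
      + iteratedDeriv 1 u (φ x) * iteratedDeriv 2 φ x)
      (iteratedDeriv 3 u (φ x) * (iteratedDeriv 1 φ x)^3
        + 3 * iteratedDeriv 2 u (φ x) * iteratedDeriv 1 φ x * iteratedDeriv 2 φ x
        + iteratedDeriv 1 u (φ x) * iteratedDeriv 3 φ x) x := by
    intro x hx
    have h1 := ((hU 2 (by norm_num) x hx).mul ((hP 1 x hx).pow 2)).add
      ((hU 1 (by norm_num) x hx).mul (hP 2 x hx))
    exact h1.congr_deriv (by simp only [Pi.mul_apply, Pi.pow_apply]; ring)
  have E3 : ∀ x ∈ J, iteratedDeriv 3 (u ∘ φ) x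
      = iteratedDeriv 3 u (φ x) * (iteratedDeriv 1 φ x)^3
        + 3 * iteratedDeriv 2 u (φ x) * iteratedDeriv 1 φ x * iteratedDeriv 2 φ x
        + iteratedDeriv 1 u (φ x) * iteratedDeriv 3 φ x := by
    intro x hx
    rw [show iteratedDeriv 3 (u ∘ φ) x = deriv (iteratedDeriv 2 (u ∘ φ)) x from
      congrFun iteratedDeriv_succ x]
    have heq : deriv (iteratedDeriv 2 (u ∘ φ)) x
        = deriv (fun x => iteratedDeriv 2 u (φ x) * (iteratedDeriv 1 φ x)^2
          + iteratedDeriv 1 u (φ x) * iteratedDeriv 2 φ x) x := by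
      apply Filter.EventuallyEq.deriv_eq
      exact Filter.eventuallyEq_of_mem (hJ.mem_nhds hx) fun y hy => E2 y hy
    rw [heq, (hg2 x hx).deriv]
  -- order 4
  have hg3 : ∀ x ∈ J, HasDerivAt (fun x => iteratedDeriv 3 u (φ x) * (iteratedDeriv 1 φ x)^3
      + 3 * iteratedDeriv 2 u (φ x) * iteratedDeriv 1 φ x * iteratedDeriv 2 φ x
      + iteratedDeriv 1 u (φ x) * iteratedDeriv 3 φ x)
      (iteratedDeriv 4 u (φ x) * (iteratedDeriv 1 φ x)^4
        + 6 * iteratedDeriv 3 u (φ x) * (iteratedDeriv 1 φ x)^2 * iteratedDeriv 2 φ x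
        + iteratedDeriv 2 u (φ x) * (4 * iteratedDeriv 1 φ x * iteratedDeriv 3 φ x
            + 3 * (iteratedDeriv 2 φ x)^2)
        + iteratedDeriv 1 u (φ x) * iteratedDeriv 4 φ x) x := by
    intro x hx
    have h1 := (((hU 3 (by norm_num) x hx).mul ((hP 1 x hx).pow 3)).add
      (((hasDerivAt_const x (3:ℝ)).mul (hU 2 (by norm_num) x hx)).mul
        ((hP 1 x hx).mul (hP 2 x hx)))).add
      ((hU 1 (by norm_num) x hx).mul (hP 3 x hx))
    have h2 := h1.congr_of_eventuallyEq
      (Filter.EventuallyEq.of_eq (funext fun y => by ring :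
        (fun x => iteratedDeriv 3 u (φ x) * (iteratedDeriv 1 φ x)^3
          + 3 * iteratedDeriv 2 u (φ x) * iteratedDeriv 1 φ x * iteratedDeriv 2 φ x
          + iteratedDeriv 1 u (φ x) * iteratedDeriv 3 φ x)
        = fun x => iteratedDeriv 3 u (φ x) * (iteratedDeriv 1 φ x)^3
          + 3 * iteratedDeriv 2 u (φ x) * (iteratedDeriv 1 φ x * iteratedDeriv 2 φ x)
          + iteratedDeriv 1 u (φ x) * iteratedDeriv 3 φ x))
    exact h2.congr_deriv (by simp only [Pi.mul_apply, Pi.pow_apply]; ring)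
  have E4 : ∀ x ∈ J, iteratedDeriv 4 (u ∘ φ) x
      = iteratedDeriv 4 u (φ x) * (iteratedDeriv 1 φ x)^4
        + 6 * iteratedDeriv 3 u (φ x) * (iteratedDeriv 1 φ x)^2 * iteratedDeriv 2 φ x
        + iteratedDeriv 2 u (φ x) * (4 * iteratedDeriv 1 φ x * iteratedDeriv 3 φ x
            + 3 * (iteratedDeriv 2 φ x)^2)
        + iteratedDeriv 1 u (φ x) * iteratedDeriv 4 φ x := by
    intro x hx
    rw [show iteratedDeriv 4 (u ∘ φ) x = deriv (iteratedDeriv 3 (u ∘ φ)) x from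
      congrFun iteratedDeriv_succ x]
    have heq : deriv (iteratedDeriv 3 (u ∘ φ)) x
        = deriv (fun x => iteratedDeriv 3 u (φ x) * (iteratedDeriv 1 φ x)^3
          + 3 * iteratedDeriv 2 u (φ x) * iteratedDeriv 1 φ x * iteratedDeriv 2 φ x
          + iteratedDeriv 1 u (φ x) * iteratedDeriv 3 φ x) x := by
      apply Filter.EventuallyEq.deriv_eq
      exact Filter.eventuallyEq_of_mem (hJ.mem_nhds hx) fun y hy => E3 y hy
    rw [heq, (hg3 x hx).deriv]
  exact fun x hx => ⟨E1 x hx, E2 x hx, E3 x hx, E4 x hx⟩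

/-- Leibniz rule identities up to order 4 -/
lemma leibniz4 {J : Set ℝ} (hJ : IsOpen J) {μ y : ℝ → ℝ}
    (hμ : ContDiffOn ℝ ((⊤ : ℕ∞) : WithTop ℕ∞) μ J) (hy : ContDiffOn ℝ 4 y J) :
    ∀ x ∈ J,
      iteratedDeriv 1 (fun x => μ x * y x) x
        = iteratedDeriv 1 μ x * y x + μ x * iteratedDeriv 1 y x ∧
      iteratedDeriv 2 (fun x => μ x * y x) x
        = iteratedDeriv 2 μ x * y x + 2 * iteratedDeriv 1 μ x * iteratedDeriv 1 y x
          + μ x * iteratedDeriv 2 y x ∧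
      iteratedDeriv 3 (fun x => μ x * y x) x
        = iteratedDeriv 3 μ x * y x + 3 * iteratedDeriv 2 μ x * iteratedDeriv 1 y x
          + 3 * iteratedDeriv 1 μ x * iteratedDeriv 2 y x + μ x * iteratedDeriv 3 y x ∧
      iteratedDeriv 4 (fun x => μ x * y x) x
        = iteratedDeriv 4 μ x * y x + 4 * iteratedDeriv 3 μ x * iteratedDeriv 1 y x
          + 6 * iteratedDeriv 2 μ x * iteratedDeriv 2 y x
          + 4 * iteratedDeriv 1 μ x * iteratedDeriv 3 y x + μ x * iteratedDeriv 4 y x := by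
  have hy' : ContDiffOn ℝ ((4:ℕ) : WithTop ℕ∞) y J := by exact_mod_cast hy
  have hM : ∀ (k : ℕ), ∀ x ∈ J,
      HasDerivAt (iteratedDeriv k μ) (iteratedDeriv (k+1) μ x) x := fun k x hx =>
    hasDerivAt_iteratedDeriv hJ hμ (natCast_lt_infty k) hx
  have hY : ∀ (k : ℕ), k < 4 → ∀ x ∈ J,
      HasDerivAt (iteratedDeriv k y) (iteratedDeriv (k+1) y x) x := fun k hk x hx =>
    hasDerivAt_iteratedDeriv hJ hy' (by exact_mod_cast hk) hx
  have hM0 : ∀ x ∈ J, HasDerivAt μ (iteratedDeriv 1 μ x) x := by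
    intro x hx; have := hM 0 x hx; rwa [iteratedDeriv_zero] at this
  have hY0 : ∀ x ∈ J, HasDerivAt y (iteratedDeriv 1 y x) x := by
    intro x hx; have := hY 0 (by norm_num) x hx; rwa [iteratedDeriv_zero] at this
  have E1 : ∀ x ∈ J, iteratedDeriv 1 (fun x => μ x * y x) x
      = iteratedDeriv 1 μ x * y x + μ x * iteratedDeriv 1 y x := by
    intro x hx; rw [iteratedDeriv_one]
    exact ((hM0 x hx).mul (hY0 x hx)).deriv
  have hg1 : ∀ x ∈ J, HasDerivAt (fun x => iteratedDeriv 1 μ x * y x + μ x * iteratedDeriv 1 y x)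
      (iteratedDeriv 2 μ x * y x + 2 * iteratedDeriv 1 μ x * iteratedDeriv 1 y x
        + μ x * iteratedDeriv 2 y x) x := by
    intro x hx
    have := ((hM 1 x hx).mul (hY0 x hx)).add ((hM0 x hx).mul (hY 1 (by norm_num) x hx))
    exact this.congr_deriv (by ring)
  have E2 : ∀ x ∈ J, iteratedDeriv 2 (fun x => μ x * y x) x
      = iteratedDeriv 2 μ x * y x + 2 * iteratedDeriv 1 μ x * iteratedDeriv 1 y x
        + μ x * iteratedDeriv 2 y x := by
    intro x hx
    rw [show iteratedDeriv 2 (fun x => μ x * y x) x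
        = deriv (iteratedDeriv 1 (fun x => μ x * y x)) x from congrFun iteratedDeriv_succ x]
    have heq : deriv (iteratedDeriv 1 (fun x => μ x * y x)) x
        = deriv (fun x => iteratedDeriv 1 μ x * y x + μ x * iteratedDeriv 1 y x) x :=
      Filter.EventuallyEq.deriv_eq <|
        Filter.eventuallyEq_of_mem (hJ.mem_nhds hx) fun y' hy'' => E1 y' hy''
    rw [heq, (hg1 x hx).deriv]
  have hg2 : ∀ x ∈ J, HasDerivAt (fun x => iteratedDeriv 2 μ x * y x
      + 2 * iteratedDeriv 1 μ x * iteratedDeriv 1 y x + μ x * iteratedDeriv 2 y x)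
      (iteratedDeriv 3 μ x * y x + 3 * iteratedDeriv 2 μ x * iteratedDeriv 1 y x
        + 3 * iteratedDeriv 1 μ x * iteratedDeriv 2 y x + μ x * iteratedDeriv 3 y x) x := by
    intro x hx
    have h1 := (((hM 2 x hx).mul (hY0 x hx)).add
      (((hasDerivAt_const x (2:ℝ)).mul (hM 1 x hx)).mul (hY 1 (by norm_num) x hx))).add
      ((hM0 x hx).mul (hY 2 (by norm_num) x hx))
    have h2 := h1.congr_of_eventuallyEq
      (Filter.EventuallyEq.of_eq (funext fun z => by ring :
        (fun x => iteratedDeriv 2 μ x * y x + 2 * iteratedDeriv 1 μ x * iteratedDeriv 1 y x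
          + μ x * iteratedDeriv 2 y x)
        = fun x => iteratedDeriv 2 μ x * y x + 2 * iteratedDeriv 1 μ x * iteratedDeriv 1 y x
          + μ x * iteratedDeriv 2 y x))
    exact h2.congr_deriv (by simp only [Pi.mul_apply, Pi.pow_apply]; ring)
  have E3 : ∀ x ∈ J, iteratedDeriv 3 (fun x => μ x * y x) x
      = iteratedDeriv 3 μ x * y x + 3 * iteratedDeriv 2 μ x * iteratedDeriv 1 y x
        + 3 * iteratedDeriv 1 μ x * iteratedDeriv 2 y x + μ x * iteratedDeriv 3 y x := by
    intro x hx
    rw [show iteratedDeriv 3 (fun x => μ x * y x) x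
        = deriv (iteratedDeriv 2 (fun x => μ x * y x)) x from congrFun iteratedDeriv_succ x]
    have heq : deriv (iteratedDeriv 2 (fun x => μ x * y x)) x
        = deriv (fun x => iteratedDeriv 2 μ x * y x
          + 2 * iteratedDeriv 1 μ x * iteratedDeriv 1 y x + μ x * iteratedDeriv 2 y x) x :=
      Filter.EventuallyEq.deriv_eq <|
        Filter.eventuallyEq_of_mem (hJ.mem_nhds hx) fun y' hy'' => E2 y' hy''
    rw [heq, (hg2 x hx).deriv]
  have hg3 : ∀ x ∈ J, HasDerivAt (fun x => iteratedDeriv 3 μ x * y x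
      + 3 * iteratedDeriv 2 μ x * iteratedDeriv 1 y x
      + 3 * iteratedDeriv 1 μ x * iteratedDeriv 2 y x + μ x * iteratedDeriv 3 y x)
      (iteratedDeriv 4 μ x * y x + 4 * iteratedDeriv 3 μ x * iteratedDeriv 1 y x
        + 6 * iteratedDeriv 2 μ x * iteratedDeriv 2 y x
        + 4 * iteratedDeriv 1 μ x * iteratedDeriv 3 y x + μ x * iteratedDeriv 4 y x) x := by
    intro x hx
    have h1 := ((((hM 3 x hx).mul (hY0 x hx)).add
      (((hasDerivAt_const x (3:ℝ)).mul (hM 2 x hx)).mul (hY 1 (by norm_num) x hx))).add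
      (((hasDerivAt_const x (3:ℝ)).mul (hM 1 x hx)).mul (hY 2 (by norm_num) x hx))).add
      ((hM0 x hx).mul (hY 3 (by norm_num) x hx))
    exact h1.congr_deriv (by simp only [Pi.mul_apply, Pi.pow_apply]; ring)
  have E4 : ∀ x ∈ J, iteratedDeriv 4 (fun x => μ x * y x) x
      = iteratedDeriv 4 μ x * y x + 4 * iteratedDeriv 3 μ x * iteratedDeriv 1 y x
        + 6 * iteratedDeriv 2 μ x * iteratedDeriv 2 y x
        + 4 * iteratedDeriv 1 μ x * iteratedDeriv 3 y x + μ x * iteratedDeriv 4 y x := by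
    intro x hx
    rw [show iteratedDeriv 4 (fun x => μ x * y x) x
        = deriv (iteratedDeriv 3 (fun x => μ x * y x)) x from congrFun iteratedDeriv_succ x]
    have heq : deriv (iteratedDeriv 3 (fun x => μ x * y x)) x
        = deriv (fun x => iteratedDeriv 3 μ x * y x
          + 3 * iteratedDeriv 2 μ x * iteratedDeriv 1 y x
          + 3 * iteratedDeriv 1 μ x * iteratedDeriv 2 y x + μ x * iteratedDeriv 3 y x) x :=
      Filter.EventuallyEq.deriv_eq <|
        Filter.eventuallyEq_of_mem (hJ.mem_nhds hx) fun y' hy'' => E3 y' hy''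
    rw [heq, (hg3 x hx).deriv]
  exact fun x hx => ⟨E1 x hx, E2 x hx, E3 x hx, E4 x hx⟩

/-- local solution of the 2nd-order linear ODE `w'' = q * w`, `w x0 = 1`, positive near x0 -/
lemma exists_ode_w {I : Set ℝ} (hI : IsOpen I) {q : ℝ → ℝ} (hq : ContDiffOn ℝ ((⊤:ℕ∞) : WithTop ℕ∞) q I)
    {x0 : ℝ} (hx0 : x0 ∈ I) :
    ∃ w g : ℝ → ℝ, ∃ ε > (0:ℝ), Ioo (x0-ε) (x0+ε) ⊆ I ∧
      (∀ x ∈ Ioo (x0-ε) (x0+ε), 0 < w x) ∧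
      (∀ x ∈ Ioo (x0-ε) (x0+ε), HasDerivAt w (g x) x) ∧
      (∀ x ∈ Ioo (x0-ε) (x0+ε), HasDerivAt g (q x * w x) x) := by
  classical
  set V : ℝ × ℝ × ℝ → ℝ × ℝ × ℝ := fun z => (1, z.2.2, q z.1 * z.2.1) with hVdef
  have hq1 : ContDiffAt ℝ 1 q x0 :=
    (hq.contDiffAt (hI.mem_nhds hx0)).of_le (by exact_mod_cast le_top)
  have hV : ContDiffAt ℝ 1 V (x0, 1, 0) := by
    apply ContDiffAt.prodMk
    · exact contDiffAt_const
    apply ContDiffAt.prodMk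
    · exact (contDiff_snd.comp contDiff_snd).contDiffAt
    · exact (hq1.comp _ contDiff_fst.contDiffAt).mul
        (contDiff_fst.comp contDiff_snd).contDiffAt
  obtain ⟨z, hz0, ε₀, hε₀, hz⟩ := hV.exists_forall_mem_closedBall_exists_eq_forall_mem_Ioo_hasDerivAt₀ x0
  set S := Ioo (x0-ε₀) (x0+ε₀) with hSdef
  have hx0S : x0 ∈ S := by constructor <;> simp [hSdef] <;> linarith
  -- first component is the identity
  have hz1D : ∀ t ∈ S, HasDerivAt (fun t => (z t).1 - t) 0 t := by
    intro t ht
    have h1 : HasDerivAt (fun t => (z t).1) 1 t := by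
      have := hasFDerivAt_fst.comp_hasDerivAt t (hz t ht)
      simpa [hVdef, Function.comp_def] using this
    exact (h1.sub (hasDerivAt_id t)).congr_deriv (by simp)
  have hz1 : ∀ t ∈ S, (z t).1 = t := by
    intro t ht
    have hconst : (fun t => (z t).1 - t) t = (fun t => (z t).1 - t) x0 := by
      apply (convex_Ioo _ _).is_const_of_fderivWithin_eq_zero
        (fun s hs => ((hz1D s hs).differentiableAt).differentiableWithinAt) ?_ ht hx0S
      intro s hs
      rw [fderivWithin_of_isOpen isOpen_Ioo hs]
      have := (hz1D s hs).hasFDerivAt.fderiv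
      rw [this]
      ext v; simp
    have : (z t).1 - t = (z x0).1 - x0 := hconst
    rw [hz0] at this
    simp at this
    linarith
  set w : ℝ → ℝ := fun t => (z t).2.1 with hwdef
  set g : ℝ → ℝ := fun t => (z t).2.2 with hgdef
  have hwD : ∀ t ∈ S, HasDerivAt w (g t) t := by
    intro t ht
    have := hasFDerivAt_fst.comp_hasDerivAt t (hasFDerivAt_snd.comp_hasDerivAt t (hz t ht))
    simpa [hVdef, Function.comp_def] using this
  have hgD : ∀ t ∈ S, HasDerivAt g (q t * w t) t := by
    intro t ht
    have := hasFDerivAt_snd.comp_hasDerivAt t (hasFDerivAt_snd.comp_hasDerivAt t (hz t ht))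
    simp only [hVdef] at this
    rw [hz1 t ht] at this
    simpa [Function.comp_def] using this
  have hw0 : w x0 = 1 := by show (z x0).2.1 = 1; rw [hz0]
  -- w is positive near x0
  have hwc : ContinuousAt w x0 := (hwD x0 hx0S).differentiableAt.continuousAt
  have hpos : ∀ᶠ t in nhds x0, 0 < w t :=
    (continuousAt_const (y := (0:ℝ))).eventually_lt hwc (by rw [hw0]; norm_num)
  obtain ⟨δ₂, hδ₂, hδ₂pos⟩ := Metric.eventually_nhds_iff.mp hpos
  obtain ⟨δ₁, hδ₁, hδ₁sub⟩ := Metric.isOpen_iff.mp hI x0 hx0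
  refine ⟨w, g, min ε₀ (min δ₁ δ₂) / 2, by positivity, ?_, ?_, ?_, ?_⟩ <;>
    intro t ht <;>
    [skip; skip; skip; skip]
  all_goals {
    have h1 : |t - x0| < min ε₀ (min δ₁ δ₂) / 2 := by
      rw [abs_sub_lt_iff]; obtain ⟨h,h'⟩ := ht; constructor <;> linarith
    have hε' : min ε₀ (min δ₁ δ₂) / 2 < ε₀ := by
      have := min_le_left ε₀ (min δ₁ δ₂)
      have : min ε₀ (min δ₁ δ₂) / 2 ≤ ε₀/2 := by linarith
      linarith
    have hδ1' : min ε₀ (min δ₁ δ₂) / 2 < δ₁ := by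
      have h := (min_le_right ε₀ (min δ₁ δ₂)).trans (min_le_left δ₁ δ₂)
      linarith
    have hδ2' : min ε₀ (min δ₁ δ₂) / 2 < δ₂ := by
      have h := (min_le_right ε₀ (min δ₁ δ₂)).trans (min_le_right δ₁ δ₂)
      linarith
    have htS : t ∈ S := by
      constructor <;> [linarith [abs_sub_lt_iff.mp h1]; linarith [(abs_sub_lt_iff.mp h1).1]]
    first
      | exact hδ₁sub (by simpa [Real.dist_eq] using lt_trans h1 hδ1')
      | exact hδ₂pos (by simpa [Real.dist_eq] using lt_trans h1 hδ2')
      | exact hwD t htS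
      | exact hgD t htS
  }

lemma hasDerivAt_intervalIntegral {s : Set ℝ} (hs : IsOpen s) (hc : s.OrdConnected)
    {f : ℝ → ℝ} (hf : ContinuousOn f s) {x0 x : ℝ} (hx0 : x0 ∈ s) (hx : x ∈ s) :
    HasDerivAt (fun t => ∫ u in x0..t, f u) (f x) x := by
  apply intervalIntegral.integral_hasDerivAt_right
  · exact (hf.mono (hc.uIcc_subset hx0 hx)).intervalIntegrable
  · exact hf.stronglyMeasurableAtFilter hs x hx
  · exact hf.continuousAt (hs.mem_nhds hx)

lemma ode2_smooth {s : Set ℝ} (hs : IsOpen s) {w g q : ℝ → ℝ}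
    (hq : ContDiffOn ℝ ((⊤:ℕ∞) : WithTop ℕ∞) q s)
    (hw : ∀ x ∈ s, HasDerivAt w (g x) x) (hg : ∀ x ∈ s, HasDerivAt g (q x * w x) x) :
    ContDiffOn ℝ ((⊤:ℕ∞) : WithTop ℕ∞) w s ∧ ContDiffOn ℝ ((⊤:ℕ∞) : WithTop ℕ∞) g s := by
  have key : ∀ n : ℕ, ContDiffOn ℝ n w s ∧ ContDiffOn ℝ n g s := by
    intro n
    induction n with
    | zero =>
      constructor <;> rw [show ((0:ℕ) : WithTop ℕ∞) = 0 by norm_cast, contDiffOn_zero]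
      · exact fun x hx => ((hw x hx).differentiableAt.continuousAt).continuousWithinAt
      · exact fun x hx => ((hg x hx).differentiableAt.continuousAt).continuousWithinAt
    | succ n ih =>
      have hcast : ((n+1:ℕ) : WithTop ℕ∞) = (n : WithTop ℕ∞) + 1 := by push_cast; ring
      constructor <;> rw [hcast, contDiffOn_succ_iff_deriv_of_isOpen hs]
      · refine ⟨fun x hx => (hw x hx).differentiableAt.differentiableWithinAt,
          fun h => absurd h (by simp), ?_⟩
        exact ih.2.congr fun x hx => (hw x hx).deriv
      · refine ⟨fun x hx => (hg x hx).differentiableAt.differentiableWithinAt,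
          fun h => absurd h (by simp), ?_⟩
        exact ((hq.of_le (by exact_mod_cast le_top)).mul ih.1).congr fun x hx => (hg x hx).deriv
  constructor <;> [exact contDiffOn_infty.mpr fun n => (key n).1;
    exact contDiffOn_infty.mpr fun n => (key n).2]

lemma smooth_invFunOn {J : Set ℝ} (hJ : IsOpen J) {φ : ℝ → ℝ}
    (hφ : ContDiffOn ℝ ((⊤:ℕ∞) : WithTop ℕ∞) φ J) (hinj : Set.InjOn φ J)
    (hd : ∀ x ∈ J, deriv φ x ≠ 0) :
    ContDiffOn ℝ ((⊤:ℕ∞) : WithTop ℕ∞) (Function.invFunOn φ J) (φ '' J) ∧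
    ∀ x ∈ J, Function.invFunOn φ J (φ x) = x := by
  have hleft : ∀ x ∈ J, Function.invFunOn φ J (φ x) = x :=
    fun x hx => hinj.leftInvOn_invFunOn hx
  refine ⟨?_, hleft⟩
  rintro t ⟨x, hx, rfl⟩
  have hφx : ContDiffAt ℝ ((⊤:ℕ∞) : WithTop ℕ∞) φ x := hφ.contDiffAt (hJ.mem_nhds hx)
  have hdiff : DifferentiableAt ℝ φ x :=
    hφx.differentiableAt (by simp)
  have hD : HasDerivAt φ (deriv φ x) x := hdiff.hasDerivAt
  set e : ℝ ≃L[ℝ] ℝ := ContinuousLinearEquiv.unitsEquivAut ℝ (Units.mk0 _ (hd x hx)) with he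
  have hFD : HasFDerivAt φ (e : ℝ →L[ℝ] ℝ) x := by
    have h1 := hD.hasFDerivAt
    have h2 : (e : ℝ →L[ℝ] ℝ) = ContinuousLinearMap.smulRight (1 : ℝ →L[ℝ] ℝ) (deriv φ x) := by
      ext v
      simp [he, ContinuousLinearEquiv.unitsEquivAut, mul_comm]
    rw [h2]
    exact h1
  have h1n : (1 : WithTop ℕ∞) ≤ ((⊤:ℕ∞) : WithTop ℕ∞) := by
    exact_mod_cast (le_top : (1:ℕ∞) ≤ ⊤)
  have hloc := hφx.to_localInverse (f' := e) hFD (by simp)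
  have hev0 : ∀ᶠ x' in nhds x, Function.invFunOn φ J (φ x') = x' :=
    Filter.eventually_of_mem (hJ.mem_nhds hx) hleft
  have hev := (hφx.hasStrictFDerivAt' hFD (by simp)).localInverse_unique hev0
  exact (hloc.congr_of_eventuallyEq hev).contDiffWithinAt

lemma smooth_iteratedDeriv {s : Set ℝ} (hs : IsOpen s) {f : ℝ → ℝ}
    (hf : ContDiffOn ℝ (⊤ : ℕ∞) f s) (k : ℕ) : ContDiffOn ℝ (⊤ : ℕ∞) (iteratedDeriv k f) s := by
  induction k with
  | zero => simpa [iteratedDeriv_zero] using hf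
  | succ k ih =>
    rw [iteratedDeriv_succ]
    exact ((contDiffOn_infty_iff_deriv_of_isOpen hs).mp ih).2

lemma smooth_of_hasDerivAt {s : Set ℝ} (hs : IsOpen s) {F f : ℝ → ℝ}
    (hf : ContDiffOn ℝ (⊤ : ℕ∞) f s) (hF : ∀ x ∈ s, HasDerivAt F (f x) x) :
    ContDiffOn ℝ (⊤ : ℕ∞) F s := by
  rw [contDiffOn_infty_iff_deriv_of_isOpen hs]
  refine ⟨fun x hx => ((hF x hx).differentiableAt).differentiableWithinAt, ?_⟩
  exact hf.congr fun x hx => (hF x hx).deriv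

lemma laguerre_algebra
    (p1 p2 p3 p4 m0 m1 m2 m3 m4 y0 y1 y2 y3 y4 u0 u1 u2 u3 u4 c0 c1 c2 c3 a b : ℝ)
    (hp1 : p1 ≠ 0) (hm0 : m0 ≠ 0)
    (h1 : m1*y0 + m0*y1 = u1*p1)
    (h2 : m2*y0 + 2*m1*y1 + m0*y2 = u2*p1^2 + u1*p2)
    (h3 : m3*y0 + 3*m2*y1 + 3*m1*y2 + m0*y3 = u3*p1^3 + 3*u2*p1*p2 + u1*p3)
    (h4 : m4*y0 + 4*m3*y1 + 6*m2*y2 + 4*m1*y3 + m0*y4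
        = u4*p1^4 + 6*u3*p1^2*p2 + u2*(4*p1*p3 + 3*p2^2) + u1*p4)
    (h0 : u0 = m0*y0)
    (hode : y4 + c3*y3 + c2*y2 + c1*y1 + c0*y0 = 0)
    (hB3 : (4*m1 - m0*c3)*p1 = 6*m0*p2)
    (hB2 : (6*m2 - m0*c2)*p1^2 - 18*m1*p2*p1 + (15*p2^2 - 4*p1*p3)*m0 = 0)
    (ha : a = -((4*m3 - m0*c1)*p1^3 - 18*m2*p2*p1^2 + 2*m1*(15*p2^2 - 4*p1*p3)*p1
          + (10*p1*p2*p3 - 15*p2^3 - p1^2*p4)*m0) / (m0*p1^6))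
    (hb : b = (-m0*((m4 - m0*c0)*p1^3 - 6*m3*p2*p1^2 + (15*p2^2 - 4*p1*p3)*m2*p1
          + (10*p1*p2*p3 - 15*p2^3 - p1^2*p4)*m1)
          + m1*((4*m3 - m0*c1)*p1^3 - 18*m2*p2*p1^2 + 2*m1*(15*p2^2 - 4*p1*p3)*p1
          + (10*p1*p2*p3 - 15*p2^3 - p1^2*p4)*m0)) / (m0^2*p1^7)) :
    u4 + a*u1 + b*u0 = 0 := by
  have hm2 : m0^2 ≠ 0 := pow_ne_zero _ hm0
  have hp6 : p1^6 ≠ 0 := pow_ne_zero _ hp1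
  have hp7 : p1^7 ≠ 0 := pow_ne_zero _ hp1
  have ha' : a*(m0*p1^6) = -((4*m3 - m0*c1)*p1^3 - 18*m2*p2*p1^2
      + 2*m1*(15*p2^2 - 4*p1*p3)*p1 + (10*p1*p2*p3 - 15*p2^3 - p1^2*p4)*m0) := by
    rw [ha]; field_simp
  have hb' : b*(m0^2*p1^7) = -m0*((m4 - m0*c0)*p1^3 - 6*m3*p2*p1^2
      + (15*p2^2 - 4*p1*p3)*m2*p1 + (10*p1*p2*p3 - 15*p2^3 - p1^2*p4)*m1)
      + m1*((4*m3 - m0*c1)*p1^3 - 18*m2*p2*p1^2 + 2*m1*(15*p2^2 - 4*p1*p3)*p1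
      + (10*p1*p2*p3 - 15*p2^3 - p1^2*p4)*m0) := by
    rw [hb]; field_simp
  have key : (u4 + a*u1 + b*u0) * (m0^2*p1^7) = 0 := by
    linear_combination (-(m0^2*p1^3)) * h4 + (6*m0^2*p1^2*p2) * h3
      + (-(m0^2*p1*(15*p2^2 - 4*p1*p3))) * h2
      + (-(m0^2*(10*p1*p2*p3 - 15*p2^3 - p1^2*p4)) - a*m0^2*p1^6) * h1
      + (-m0*((m4 - m0*c0)*p1^3 - 6*m3*p2*p1^2 + (15*p2^2 - 4*p1*p3)*m2*p1
          + (10*p1*p2*p3 - 15*p2^3 - p1^2*p4)*m1)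
        + m1*((4*m3 - m0*c1)*p1^3 - 18*m2*p2*p1^2 + 2*m1*(15*p2^2 - 4*p1*p3)*p1
          + (10*p1*p2*p3 - 15*p2^3 - p1^2*p4)*m0)) * h0
      + (m0^3*p1^3) * hode + (y3*m0^2*p1^2) * hB3 + (y2*m0^2*p1) * hB2
      + (m0*(m1*y0 + m0*y1)) * ha' + u0 * hb'
  have := mul_ne_zero hm2 hp7
  exact (mul_eq_zero.mp key).resolve_right this

set_option maxHeartbeats 2000000 in
/-- every linear fourth-order ODE can locally be brought to the Laguerre
form `u'''' + α(t)u' + β(t)u = 0` by a change of variables `t = φ(x)`, `u = μ(x)·y`. -/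
theorem laguerre_form_local
    (I : Set ℝ) (hI : IsOpen I) (hIc : I.OrdConnected)
    (c0 c1 c2 c3 : ℝ → ℝ)
    (hc0 : ContDiffOn ℝ (⊤ : ℕ∞) c0 I) (hc1 : ContDiffOn ℝ (⊤ : ℕ∞) c1 I)
    (hc2 : ContDiffOn ℝ (⊤ : ℕ∞) c2 I) (hc3 : ContDiffOn ℝ (⊤ : ℕ∞) c3 I) :
    ∀ x0 ∈ I, ∃ I0 : Set ℝ, IsOpen I0 ∧ I0.OrdConnected ∧ I0 ⊆ I ∧ x0 ∈ I0 ∧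
      ∃ φ μ : ℝ → ℝ,
        ContDiffOn ℝ (⊤ : ℕ∞) φ I0 ∧ ContDiffOn ℝ (⊤ : ℕ∞) μ I0 ∧
        (∀ x ∈ I0, 0 < deriv φ x) ∧ (∀ x ∈ I0, μ x ≠ 0) ∧
        ∃ α β : ℝ → ℝ,
          ContDiffOn ℝ (⊤ : ℕ∞) α (φ '' I0) ∧ ContDiffOn ℝ (⊤ : ℕ∞) β (φ '' I0) ∧
          ∀ y : ℝ → ℝ, ContDiffOn ℝ 4 y I0 →
            (∀ x ∈ I0, iteratedDeriv 4 y x + c3 x * iteratedDeriv 3 y x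
              + c2 x * iteratedDeriv 2 y x + c1 x * deriv y x + c0 x * y x = 0) →
            ∀ (u : ℝ → ℝ) (W : Set ℝ), IsOpen W → (∀ x ∈ I0, φ x ∈ W) →
              ContDiffOn ℝ 4 u W → (∀ x ∈ I0, u (φ x) = μ x * y x) →
              ∀ x ∈ I0, iteratedDeriv 4 u (φ x) + α (φ x) * deriv u (φ x)
                + β (φ x) * u (φ x) = 0 := by
  intro x0 hx0
  have hone : ((1:ℕ∞) : WithTop ℕ∞) ≤ ((⊤:ℕ∞) : WithTop ℕ∞) := by
    exact_mod_cast (le_top : (1:ℕ∞) ≤ ⊤)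
  -- the derivative of c3 is smooth on I
  have hc3d : ContDiffOn ℝ ((⊤:ℕ∞) : WithTop ℕ∞) (deriv c3) I :=
    hc3.deriv_of_isOpen hI (by exact_mod_cast (le_refl ((⊤:ℕ∞))))
  -- the coefficient of the second-order linear equation for w
  set qt : ℝ → ℝ := fun x => -((8*c2 x - 12*deriv c3 x - 3*(c3 x * c3 x))/80) with hqt_def
  have hqtS : ContDiffOn ℝ ((⊤:ℕ∞) : WithTop ℕ∞) qt I := by
    apply ContDiffOn.neg
    apply ContDiffOn.div_const
    exact ((contDiffOn_const.mul hc2).sub (contDiffOn_const.mul hc3d)).sub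
      (contDiffOn_const.mul (hc3.mul hc3))
  -- solve the ODE w'' = qt * w locally
  obtain ⟨w, g, ε, hε, hJI, hwpos, hwD, hgD⟩ := exists_ode_w hI hqtS hx0
  set J := Ioo (x0-ε) (x0+ε) with hJ_def
  have hJ : IsOpen J := isOpen_Ioo
  have hJc : J.OrdConnected := ordConnected_Ioo
  have hx0J : x0 ∈ J := by constructor <;> simp [hJ_def] <;> linarith
  have hwne : ∀ x ∈ J, w x ≠ 0 := fun x hx => ne_of_gt (hwpos x hx)
  obtain ⟨hwS, hgS⟩ := ode2_smooth hJ (hqtS.mono hJI) hwD hgD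
  -- differentiability of c3 on J
  have hc3D : ∀ x ∈ J, HasDerivAt c3 (deriv c3 x) x := fun x hx =>
    ((hc3.contDiffAt (hI.mem_nhds (hJI hx))).differentiableAt (by simp)).hasDerivAt
  -- the integrating factor K
  set Gf : ℝ → ℝ := fun s => ∫ t in x0..s, c3 t with hGf_def
  have hGfD : ∀ x ∈ J, HasDerivAt Gf (c3 x) x := fun x hx =>
    hasDerivAt_intervalIntegral hJ hJc (hc3.continuousOn.mono hJI) hx0J hx
  set K : ℝ → ℝ := fun s => Real.exp (Gf s / 4) with hK_def
  have hKD : ∀ x ∈ J, HasDerivAt K (K x * (c3 x / 4)) x := fun x hx =>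
    ((hGfD x hx).div_const 4).exp
  have hKS : ContDiffOn ℝ ((⊤:ℕ∞) : WithTop ℕ∞) K J := by
    have hGfS : ContDiffOn ℝ ((⊤:ℕ∞) : WithTop ℕ∞) Gf J :=
      smooth_of_hasDerivAt hJ (hc3.mono hJI) hGfD
    exact Real.contDiff_exp.comp_contDiffOn (hGfS.div_const 4)
  have hKpos : ∀ x, 0 < K x := fun x => Real.exp_pos _
  have hKne : ∀ x, K x ≠ 0 := fun x => ne_of_gt (hKpos x)
  -- the change of variables Phi and the multiplier Mu
  set Phi : ℝ → ℝ := fun s => ∫ t in x0..s, ((w t)^2)⁻¹ with hPhi_def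
  have hPhicont : ContinuousOn (fun t => ((w t)^2)⁻¹) J :=
    ((hwS.continuousOn.pow 2).inv₀ fun x hx => pow_ne_zero 2 (hwne x hx))
  have hPhiD : ∀ x ∈ J, HasDerivAt Phi (((w x)^2)⁻¹) x := fun x hx =>
    hasDerivAt_intervalIntegral hJ hJc hPhicont hx0J hx
  have hPhiS : ContDiffOn ℝ ((⊤:ℕ∞) : WithTop ℕ∞) Phi J :=
    smooth_of_hasDerivAt hJ ((hwS.pow 2).inv fun x hx => pow_ne_zero 2 (hwne x hx)) hPhiD
  have hPhi' : ∀ x ∈ J, deriv Phi x = ((w x)^2)⁻¹ := fun x hx => (hPhiD x hx).deriv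
  have hPhipos : ∀ x ∈ J, 0 < deriv Phi x := fun x hx => by
    have := hwne x hx
    rw [hPhi' x hx]
    positivity
  set Mu : ℝ → ℝ := fun s => K s * ((w s)^3)⁻¹ with hMu_def
  have hMuS : ContDiffOn ℝ ((⊤:ℕ∞) : WithTop ℕ∞) Mu J :=
    hKS.mul ((hwS.pow 3).inv fun x hx => pow_ne_zero 3 (hwne x hx))
  have hMune : ∀ x ∈ J, Mu x ≠ 0 := fun x hx => by
    have := hwpos x hx
    simp only [hMu_def]
    positivity
  -- pointwise values of iterated derivatives of Phi
  have hp1 : ∀ x ∈ J, iteratedDeriv 1 Phi x = ((w x)^2)⁻¹ := fun x hx => by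
    rw [iteratedDeriv_one]; exact hPhi' x hx
  have hp2 : ∀ x ∈ J, iteratedDeriv 2 Phi x = -(2*g x)/(w x)^3 := by
    intro x hx
    rw [show iteratedDeriv 2 Phi x = deriv (iteratedDeriv 1 Phi) x from
      congrFun iteratedDeriv_succ x]
    have heq : deriv (iteratedDeriv 1 Phi) x = deriv (fun t => ((w t)^2)⁻¹) x :=
      Filter.EventuallyEq.deriv_eq <|
        Filter.eventuallyEq_of_mem (hJ.mem_nhds hx) fun s hs => hp1 s hs
    rw [heq, (show HasDerivAt (fun t => ((w t)^2)⁻¹) _ x from ((hwD x hx).pow 2).inv (pow_ne_zero 2 (hwne x hx))).deriv, Pi.pow_apply]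
    field_simp [hwne x hx]
    ring
  have hp3 : ∀ x ∈ J, iteratedDeriv 3 Phi x = (6*(g x)^2 - 2*qt x*(w x)^2)/(w x)^4 := by
    intro x hx
    rw [show iteratedDeriv 3 Phi x = deriv (iteratedDeriv 2 Phi) x from
      congrFun iteratedDeriv_succ x]
    have heq : deriv (iteratedDeriv 2 Phi) x = deriv (fun t => -(2*g t)/(w t)^3) x :=
      Filter.EventuallyEq.deriv_eq <|
        Filter.eventuallyEq_of_mem (hJ.mem_nhds hx) fun s hs => hp2 s hs
    have hN : HasDerivAt (fun t => -(2*g t)) (-(0*g x + 2*(qt x * w x))) x :=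
      (((hasDerivAt_const x (2:ℝ)).mul (hgD x hx))).neg
    have hD : HasDerivAt (fun t => (w t)^3) ((3:ℕ)*(w x)^(3-1)*g x) x := (hwD x hx).pow 3
    rw [heq, (show HasDerivAt (fun t => -(2*g t)/(w t)^3) _ x from hN.div hD (pow_ne_zero 3 (hwne x hx))).deriv]
    field_simp [hwne x hx]
    ring
  -- pointwise values of iterated derivatives of Mu
  have hm1 : ∀ x ∈ J, iteratedDeriv 1 Mu x
      = K x * (c3 x * w x - 12 * g x) / (4*(w x)^4) := by
    intro x hx
    rw [iteratedDeriv_one]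
    have hMuD : HasDerivAt Mu ((K x * (c3 x/4)) * ((w x)^3)⁻¹
        + K x * (-((3:ℕ)*(w x)^(3-1)*g x) / ((w x)^3)^2)) x :=
      (hKD x hx).mul (((hwD x hx).pow 3).inv (pow_ne_zero 3 (hwne x hx)))
    rw [hMuD.deriv]
    field_simp [hwne x hx]
    ring
  have hm2 : ∀ x ∈ J, iteratedDeriv 2 Mu x
      = K x * ((deriv c3 x/4 + (c3 x)^2/16 - 3*qt x)*(w x)^2
          - (3/2)*c3 x*g x*w x + 12*(g x)^2) / (w x)^5 := by
    intro x hx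
    rw [show iteratedDeriv 2 Mu x = deriv (iteratedDeriv 1 Mu) x from
      congrFun iteratedDeriv_succ x]
    have heq : deriv (iteratedDeriv 1 Mu) x
        = deriv (fun t => K t * (c3 t * w t - 12 * g t) / (4*(w t)^4)) x :=
      Filter.EventuallyEq.deriv_eq <|
        Filter.eventuallyEq_of_mem (hJ.mem_nhds hx) fun s hs => hm1 s hs
    have hN : HasDerivAt (fun t => K t * (c3 t * w t - 12 * g t))
        ((K x * (c3 x/4)) * (c3 x * w x - 12 * g x)
          + K x * ((deriv c3 x * w x + c3 x * g x) - (0 * g x + 12 * (qt x * w x)))) x :=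
      (hKD x hx).mul (((hc3D x hx).mul (hwD x hx)).sub
        ((hasDerivAt_const x (12:ℝ)).mul (hgD x hx)))
    have hD : HasDerivAt (fun t => 4*(w t)^4) (0*(w x)^4 + 4*((4:ℕ)*(w x)^(4-1)*g x)) x :=
      (hasDerivAt_const x (4:ℝ)).mul ((hwD x hx).pow 4)
    have hDne : (4:ℝ)*(w x)^4 ≠ 0 := by
      have := hwne x hx; positivity
    rw [heq, (show HasDerivAt (fun t => K t * (c3 t * w t - 12 * g t) / (4*(w t)^4)) _ x from hN.div hD hDne).deriv]
    field_simp [hwne x hx]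
    ring
  -- the two constraints
  have hB3x : ∀ x ∈ J, (4*iteratedDeriv 1 Mu x - Mu x*c3 x)*iteratedDeriv 1 Phi x
      = 6*Mu x*iteratedDeriv 2 Phi x := by
    intro x hx
    rw [hm1 x hx, hp1 x hx, hp2 x hx]
    simp only [hMu_def]
    field_simp [hwne x hx]
    ring
  have hB2x : ∀ x ∈ J, (6*iteratedDeriv 2 Mu x - Mu x*c2 x)*(iteratedDeriv 1 Phi x)^2
      - 18*iteratedDeriv 1 Mu x*iteratedDeriv 2 Phi x*iteratedDeriv 1 Phi x
      + (15*(iteratedDeriv 2 Phi x)^2 - 4*iteratedDeriv 1 Phi x*iteratedDeriv 3 Phi x)*Mu x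
      = 0 := by
    intro x hx
    rw [hm2 x hx, hm1 x hx, hp1 x hx, hp2 x hx, hp3 x hx]
    simp only [hMu_def, hqt_def]
    field_simp [hwne x hx]
    ring_nf

  -- iterated derivatives of Mu and Phi are smooth on J
  have hSMu : ∀ k : ℕ, ContDiffOn ℝ ((⊤:ℕ∞) : WithTop ℕ∞) (iteratedDeriv k Mu) J :=
    fun k => smooth_iteratedDeriv hJ hMuS k
  have hSPhi : ∀ k : ℕ, ContDiffOn ℝ ((⊤:ℕ∞) : WithTop ℕ∞) (iteratedDeriv k Phi) J :=
    fun k => smooth_iteratedDeriv hJ hPhiS k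
  have hP1ne : ∀ x ∈ J, iteratedDeriv 1 Phi x ≠ 0 := fun x hx => by
    rw [iteratedDeriv_one]; exact ne_of_gt (hPhipos x hx)
  -- the coefficient functions (in the variable x)
  set Af : ℝ → ℝ := fun x =>
    -((4*iteratedDeriv 3 Mu x - Mu x*c1 x)*(iteratedDeriv 1 Phi x)^3
      - 18*iteratedDeriv 2 Mu x*iteratedDeriv 2 Phi x*(iteratedDeriv 1 Phi x)^2
      + 2*iteratedDeriv 1 Mu x*(15*(iteratedDeriv 2 Phi x)^2
          - 4*iteratedDeriv 1 Phi x*iteratedDeriv 3 Phi x)*iteratedDeriv 1 Phi x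
      + (10*iteratedDeriv 1 Phi x*iteratedDeriv 2 Phi x*iteratedDeriv 3 Phi x
          - 15*(iteratedDeriv 2 Phi x)^3
          - (iteratedDeriv 1 Phi x)^2*iteratedDeriv 4 Phi x)*Mu x)
      / (Mu x*(iteratedDeriv 1 Phi x)^6) with hAf_def
  set Bf : ℝ → ℝ := fun x =>
    (-Mu x*((iteratedDeriv 4 Mu x - Mu x*c0 x)*(iteratedDeriv 1 Phi x)^3
      - 6*iteratedDeriv 3 Mu x*iteratedDeriv 2 Phi x*(iteratedDeriv 1 Phi x)^2
      + (15*(iteratedDeriv 2 Phi x)^2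
          - 4*iteratedDeriv 1 Phi x*iteratedDeriv 3 Phi x)*iteratedDeriv 2 Mu x*iteratedDeriv 1 Phi x
      + (10*iteratedDeriv 1 Phi x*iteratedDeriv 2 Phi x*iteratedDeriv 3 Phi x
          - 15*(iteratedDeriv 2 Phi x)^3
          - (iteratedDeriv 1 Phi x)^2*iteratedDeriv 4 Phi x)*iteratedDeriv 1 Mu x)
      + iteratedDeriv 1 Mu x*((4*iteratedDeriv 3 Mu x - Mu x*c1 x)*(iteratedDeriv 1 Phi x)^3
      - 18*iteratedDeriv 2 Mu x*iteratedDeriv 2 Phi x*(iteratedDeriv 1 Phi x)^2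
      + 2*iteratedDeriv 1 Mu x*(15*(iteratedDeriv 2 Phi x)^2
          - 4*iteratedDeriv 1 Phi x*iteratedDeriv 3 Phi x)*iteratedDeriv 1 Phi x
      + (10*iteratedDeriv 1 Phi x*iteratedDeriv 2 Phi x*iteratedDeriv 3 Phi x
          - 15*(iteratedDeriv 2 Phi x)^3
          - (iteratedDeriv 1 Phi x)^2*iteratedDeriv 4 Phi x)*Mu x))
      / (Mu x^2*(iteratedDeriv 1 Phi x)^7) with hBf_def
  -- smoothness of Af and Bf
  have hQexpr : ContDiffOn ℝ ((⊤:ℕ∞) : WithTop ℕ∞) (fun x => 15*(iteratedDeriv 2 Phi x)^2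
      - 4*iteratedDeriv 1 Phi x*iteratedDeriv 3 Phi x) J :=
    (contDiffOn_const.mul ((hSPhi 2).pow 2)).sub
      ((contDiffOn_const.mul (hSPhi 1)).mul (hSPhi 3))
  have hCexpr : ContDiffOn ℝ ((⊤:ℕ∞) : WithTop ℕ∞)
      (fun x => 10*iteratedDeriv 1 Phi x*iteratedDeriv 2 Phi x*iteratedDeriv 3 Phi x
        - 15*(iteratedDeriv 2 Phi x)^3 - (iteratedDeriv 1 Phi x)^2*iteratedDeriv 4 Phi x) J :=
    ((((contDiffOn_const.mul (hSPhi 1)).mul (hSPhi 2)).mul (hSPhi 3)).sub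
      (contDiffOn_const.mul ((hSPhi 2).pow 3))).sub (((hSPhi 1).pow 2).mul (hSPhi 4))
  have hnumA : ContDiffOn ℝ ((⊤:ℕ∞) : WithTop ℕ∞)
      (fun x => (4*iteratedDeriv 3 Mu x - Mu x*c1 x)*(iteratedDeriv 1 Phi x)^3
      - 18*iteratedDeriv 2 Mu x*iteratedDeriv 2 Phi x*(iteratedDeriv 1 Phi x)^2
      + 2*iteratedDeriv 1 Mu x*(15*(iteratedDeriv 2 Phi x)^2
          - 4*iteratedDeriv 1 Phi x*iteratedDeriv 3 Phi x)*iteratedDeriv 1 Phi x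
      + (10*iteratedDeriv 1 Phi x*iteratedDeriv 2 Phi x*iteratedDeriv 3 Phi x
          - 15*(iteratedDeriv 2 Phi x)^3
          - (iteratedDeriv 1 Phi x)^2*iteratedDeriv 4 Phi x)*Mu x) J := by
    refine ContDiffOn.add (ContDiffOn.add (ContDiffOn.sub ?_ ?_) ?_) ?_
    · exact ((contDiffOn_const.mul (hSMu 3)).sub (hMuS.mul (hc1.mono hJI))).mul
        ((hSPhi 1).pow 3)
    · exact ((contDiffOn_const.mul (hSMu 2)).mul (hSPhi 2)).mul ((hSPhi 1).pow 2)
    · exact ((contDiffOn_const.mul (hSMu 1)).mul hQexpr).mul (hSPhi 1)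
    · exact hCexpr.mul hMuS
  have hnumB : ContDiffOn ℝ ((⊤:ℕ∞) : WithTop ℕ∞)
      (fun x => (iteratedDeriv 4 Mu x - Mu x*c0 x)*(iteratedDeriv 1 Phi x)^3
      - 6*iteratedDeriv 3 Mu x*iteratedDeriv 2 Phi x*(iteratedDeriv 1 Phi x)^2
      + (15*(iteratedDeriv 2 Phi x)^2
          - 4*iteratedDeriv 1 Phi x*iteratedDeriv 3 Phi x)*iteratedDeriv 2 Mu x*iteratedDeriv 1 Phi x
      + (10*iteratedDeriv 1 Phi x*iteratedDeriv 2 Phi x*iteratedDeriv 3 Phi x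
          - 15*(iteratedDeriv 2 Phi x)^3
          - (iteratedDeriv 1 Phi x)^2*iteratedDeriv 4 Phi x)*iteratedDeriv 1 Mu x) J := by
    refine ContDiffOn.add (ContDiffOn.add (ContDiffOn.sub ?_ ?_) ?_) ?_
    · exact ((hSMu 4).sub (hMuS.mul (hc0.mono hJI))).mul ((hSPhi 1).pow 3)
    · exact ((contDiffOn_const.mul (hSMu 3)).mul (hSPhi 2)).mul ((hSPhi 1).pow 2)
    · exact (hQexpr.mul (hSMu 2)).mul (hSPhi 1)
    · exact hCexpr.mul (hSMu 1)
  have hAfS : ContDiffOn ℝ ((⊤:ℕ∞) : WithTop ℕ∞) Af J := by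
    rw [hAf_def]
    exact hnumA.neg.div (hMuS.mul ((hSPhi 1).pow 6))
      (fun x hx => mul_ne_zero (hMune x hx) (pow_ne_zero _ (hP1ne x hx)))
  have hBfS : ContDiffOn ℝ ((⊤:ℕ∞) : WithTop ℕ∞) Bf J := by
    rw [hBf_def]
    exact ((hMuS.neg.mul hnumB).add ((hSMu 1).mul hnumA)).div
      ((hMuS.pow 2).mul ((hSPhi 1).pow 7))
      (fun x hx => mul_ne_zero (pow_ne_zero _ (hMune x hx)) (pow_ne_zero _ (hP1ne x hx)))
  -- Phi is strictly monotone, with smooth inverse on the image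
  have hmono : StrictMonoOn Phi J :=
    strictMonoOn_of_deriv_pos (convex_Ioo _ _) hPhiS.continuousOn
      (fun x hx => hPhipos x (by rwa [interior_Ioo] at hx))
  obtain ⟨hpsiS, hpsileft⟩ :=
    smooth_invFunOn hJ hPhiS hmono.injOn (fun x hx => ne_of_gt (hPhipos x hx))
  have hψmaps : Set.MapsTo (Function.invFunOn Phi J) (Phi '' J) J := by
    rintro t ⟨x, hx, rfl⟩
    rw [hpsileft x hx]; exact hx
  refine ⟨J, hJ, hJc, hJI, hx0J, Phi, Mu, hPhiS, hMuS, hPhipos, hMune,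
    Af ∘ (Function.invFunOn Phi J), Bf ∘ (Function.invFunOn Phi J),
    hAfS.comp hpsiS hψmaps, hBfS.comp hpsiS hψmaps, ?_⟩
  intro y hy hyode u uW hWopen hmapsW hu huφ x hx
  have hαx : (Af ∘ (Function.invFunOn Phi J)) (Phi x) = Af x := by
    simp only [Function.comp_apply]; rw [hpsileft x hx]
  have hβx : (Bf ∘ (Function.invFunOn Phi J)) (Phi x) = Bf x := by
    simp only [Function.comp_apply]; rw [hpsileft x hx]
  have hEq : Set.EqOn (u ∘ Phi) (fun s => Mu s * y s) J := fun s hs => huφ s hs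
  have hch := chain4 hJ hWopen hPhiS hu hmapsW x hx
  have hlb := leibniz4 hJ hMuS hy x hx
  have hIt : ∀ k : ℕ, iteratedDeriv k (u ∘ Phi) x
      = iteratedDeriv k (fun s => Mu s * y s) x :=
    fun k => (hEq.iteratedDeriv_of_isOpen hJ k) hx
  have h1 := hlb.1.symm.trans ((hIt 1).symm.trans hch.1)
  have h2 := hlb.2.1.symm.trans ((hIt 2).symm.trans hch.2.1)
  have h3 := hlb.2.2.1.symm.trans ((hIt 3).symm.trans hch.2.2.1)
  have h4 := hlb.2.2.2.symm.trans ((hIt 4).symm.trans hch.2.2.2)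
  have hode' := hyode x hx
  rw [← iteratedDeriv_one] at hode'
  rw [hαx, hβx, ← iteratedDeriv_one]
  exact laguerre_algebra
    (iteratedDeriv 1 Phi x) (iteratedDeriv 2 Phi x) (iteratedDeriv 3 Phi x)
    (iteratedDeriv 4 Phi x)
    (Mu x) (iteratedDeriv 1 Mu x) (iteratedDeriv 2 Mu x) (iteratedDeriv 3 Mu x)
    (iteratedDeriv 4 Mu x)
    (y x) (iteratedDeriv 1 y x) (iteratedDeriv 2 y x) (iteratedDeriv 3 y x)
    (iteratedDeriv 4 y x)
    (u (Phi x)) (iteratedDeriv 1 u (Phi x)) (iteratedDeriv 2 u (Phi x))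
    (iteratedDeriv 3 u (Phi x)) (iteratedDeriv 4 u (Phi x))
    (c0 x) (c1 x) (c2 x) (c3 x) (Af x) (Bf x)
    (hP1ne x hx) (hMune x hx)
    h1 h2 h3 h4 (huφ x hx) hode' (hB3x x hx) (hB2x x hx)
    (by simp only [hAf_def]) (by simp only [hBf_def])
end

section
/- Let a ∈ ℝ and let ω be a four-times continuously differentiable positive real function on an open interval I satisfying ω³·ω'''' + 4(a−1)·ω²·ω'·ω''' + 3(a−1)·ω²·(ω'')² + 6(a−1)(a−2)·ω·(ω')²·ω'' + (a−1)(a−2)(a−3)·(ω')⁴ = 0 on I. Then the function u = ω^a satisfies u'''' = 0 on I. (Thus the transformation t = x, u = ω^a maps the equation, which is the image of the third-order Riccati-hierarchy equation y''' + 4y·y'' + 3(y')² + 6y²·y' + 4y⁴ = 0 under the Riccati substitution y = a·ω'/ω, to the linear equation u'''' = 0.) -/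
open Set Real

/-- the transformation `t = x`, `u = ω^a` maps solutions of the image of the
third-order Riccati-hierarchy equation under the Riccati substitution to solutions of
`u'''' = 0`. -/
theorem riccati_hierarchy_linearization
    (a : ℝ) (I : Set ℝ) (hI : IsOpen I) (hIc : I.OrdConnected)
    (ω : ℝ → ℝ) (hpos : ∀ x ∈ I, 0 < ω x) (hω : ContDiffOn ℝ 4 ω I)
    (heq : ∀ x ∈ I,
      (ω x) ^ 3 * iteratedDeriv 4 ω x
        + 4 * (a - 1) * (ω x) ^ 2 * deriv ω x * iteratedDeriv 3 ω x
        + 3 * (a - 1) * (ω x) ^ 2 * (iteratedDeriv 2 ω x) ^ 2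
        + 6 * (a - 1) * (a - 2) * ω x * (deriv ω x) ^ 2 * iteratedDeriv 2 ω x
        + (a - 1) * (a - 2) * (a - 3) * (deriv ω x) ^ 4 = 0) :
    ∀ x ∈ I, iteratedDeriv 4 (fun s => ω s ^ a) x = 0 := by
  intro x hx
  set w1 := deriv ω with hw1
  set w2 := deriv w1 with hw2
  set w3 := deriv w2 with hw3
  set w4 := deriv w3 with hw4
  have hne : ∀ y ∈ I, ω y ≠ 0 := fun y hy => (hpos y hy).ne'
  have hc3 : ContDiffOn ℝ 3 w1 I := hω.deriv_of_isOpen hI (by norm_num)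
  have hc2 : ContDiffOn ℝ 2 w2 I := hc3.deriv_of_isOpen hI (by norm_num)
  have hc1 : ContDiffOn ℝ 1 w3 I := hc2.deriv_of_isOpen hI (by norm_num)
  have h0 : ∀ y ∈ I, HasDerivAt ω (w1 y) y := fun y hy =>
    ((hω.differentiableOn (by norm_num)).differentiableAt (hI.mem_nhds hy)).hasDerivAt
  have h1 : ∀ y ∈ I, HasDerivAt w1 (w2 y) y := fun y hy =>
    ((hc3.differentiableOn (by norm_num)).differentiableAt (hI.mem_nhds hy)).hasDerivAt
  have h2 : ∀ y ∈ I, HasDerivAt w2 (w3 y) y := fun y hy =>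
    ((hc2.differentiableOn (by norm_num)).differentiableAt (hI.mem_nhds hy)).hasDerivAt
  have h3 : ∀ y ∈ I, HasDerivAt w3 (w4 y) y := fun y hy =>
    ((hc1.differentiableOn (by norm_num)).differentiableAt (hI.mem_nhds hy)).hasDerivAt
  set g1 : ℝ → ℝ := fun s => a * ω s ^ (a - 1) * w1 s with hg1
  set g2 : ℝ → ℝ := fun s =>
    a * (a - 1) * ω s ^ (a - 2) * w1 s ^ 2 + a * ω s ^ (a - 1) * w2 s with hg2
  set g3 : ℝ → ℝ := fun s =>
    a * (a - 1) * (a - 2) * ω s ^ (a - 3) * w1 s ^ 3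
      + 3 * a * (a - 1) * ω s ^ (a - 2) * w1 s * w2 s
      + a * ω s ^ (a - 1) * w3 s with hg3
  set g4 : ℝ → ℝ := fun s =>
    a * (a - 1) * (a - 2) * (a - 3) * ω s ^ (a - 4) * w1 s ^ 4
      + 6 * a * (a - 1) * (a - 2) * ω s ^ (a - 3) * w1 s ^ 2 * w2 s
      + 3 * a * (a - 1) * ω s ^ (a - 2) * w2 s ^ 2
      + 4 * a * (a - 1) * ω s ^ (a - 2) * w1 s * w3 s
      + a * ω s ^ (a - 1) * w4 s with hg4
  have hd0 : ∀ y ∈ I, HasDerivAt (fun s => ω s ^ a) (g1 y) y := by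
    intro y hy
    have := (h0 y hy).rpow_const (p := a) (Or.inl (hne y hy))
    convert this using 1
    simp only [hg1]; ring
  have hd1 : ∀ y ∈ I, HasDerivAt g1 (g2 y) y := by
    intro y hy
    have A := (((h0 y hy).rpow_const (p := a - 1) (Or.inl (hne y hy))).const_mul a).mul (h1 y hy)
    convert A using 1
    · rfl
    · rfl
    · rfl
    simp only [hg2]
    rw [show a - 1 - 1 = a - 2 by ring]
    ring
  have hd2 : ∀ y ∈ I, HasDerivAt g2 (g3 y) y := by
    intro y hy
    have A := ((((h0 y hy).rpow_const (p := a - 2) (Or.inl (hne y hy))).const_mul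
      (a * (a - 1))).mul ((h1 y hy).pow 2)).add
      ((((h0 y hy).rpow_const (p := a - 1) (Or.inl (hne y hy))).const_mul a).mul (h2 y hy))
    convert A using 1
    · rfl
    · rfl
    · rfl
    simp only [hg3]
    rw [show a - 2 - 1 = a - 3 by ring, show a - 1 - 1 = a - 2 by ring]
    norm_num
    ring
  have hd3 : ∀ y ∈ I, HasDerivAt g3 (g4 y) y := by
    intro y hy
    have A := (((((h0 y hy).rpow_const (p := a - 3) (Or.inl (hne y hy))).const_mul
      (a * (a - 1) * (a - 2))).mul ((h1 y hy).pow 3)).add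
      (((((h0 y hy).rpow_const (p := a - 2) (Or.inl (hne y hy))).const_mul
        (3 * a * (a - 1))).mul (h1 y hy)).mul (h2 y hy))).add
      ((((h0 y hy).rpow_const (p := a - 1) (Or.inl (hne y hy))).const_mul a).mul (h3 y hy))
    convert A using 1
    · rfl
    · rfl
    · rfl
    simp only [hg4]
    rw [show a - 3 - 1 = a - 4 by ring, show a - 2 - 1 = a - 3 by ring,
      show a - 1 - 1 = a - 2 by ring]
    norm_num
    ring
  have d1 : ∀ y ∈ I, deriv (fun s => ω s ^ a) y = g1 y := fun y hy => (hd0 y hy).deriv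
  have d2 : ∀ y ∈ I, deriv (deriv (fun s => ω s ^ a)) y = g2 y := by
    intro y hy
    have e : deriv (fun s => ω s ^ a) =ᶠ[nhds y] g1 :=
      Filter.eventuallyEq_of_mem (hI.mem_nhds hy) (fun z hz => d1 z hz)
    rw [e.deriv_eq, (hd1 y hy).deriv]
  have d3 : ∀ y ∈ I, deriv (deriv (deriv (fun s => ω s ^ a))) y = g3 y := by
    intro y hy
    have e : deriv (deriv (fun s => ω s ^ a)) =ᶠ[nhds y] g2 :=
      Filter.eventuallyEq_of_mem (hI.mem_nhds hy) (fun z hz => d2 z hz)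
    rw [e.deriv_eq, (hd2 y hy).deriv]
  have d4 : ∀ y ∈ I, deriv (deriv (deriv (deriv (fun s => ω s ^ a)))) y = g4 y := by
    intro y hy
    have e : deriv (deriv (deriv (fun s => ω s ^ a))) =ᶠ[nhds y] g3 :=
      Filter.eventuallyEq_of_mem (hI.mem_nhds hy) (fun z hz => d3 z hz)
    rw [e.deriv_eq, (hd3 y hy).deriv]
  have hiter : iteratedDeriv 4 (fun s => ω s ^ a) x
      = deriv (deriv (deriv (deriv (fun s => ω s ^ a)))) x := by
    rw [show (4 : ℕ) = 3 + 1 from rfl, iteratedDeriv_succ,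
      show (3 : ℕ) = 2 + 1 from rfl, iteratedDeriv_succ,
      show (2 : ℕ) = 1 + 1 from rfl, iteratedDeriv_succ, iteratedDeriv_one]
  rw [hiter, d4 x hx]
  have heqx := heq x hx
  have hi2 : iteratedDeriv 2 ω = w2 := by
    rw [show (2 : ℕ) = 1 + 1 from rfl, iteratedDeriv_succ, iteratedDeriv_one]
  have hi3 : iteratedDeriv 3 ω = w3 := by
    rw [show (3 : ℕ) = 2 + 1 from rfl, iteratedDeriv_succ, hi2]
  have hi4 : iteratedDeriv 4 ω = w4 := by
    rw [show (4 : ℕ) = 3 + 1 from rfl, iteratedDeriv_succ, hi3]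
  rw [hi2, hi3, hi4] at heqx
  have e1 : ω x ^ (a - 1) = ω x ^ (a - 4) * ω x ^ (3 : ℕ) := by
    rw [← Real.rpow_natCast (ω x) 3, ← Real.rpow_add (hpos x hx)]
    norm_num
    congr 1
    ring
  have e2 : ω x ^ (a - 2) = ω x ^ (a - 4) * ω x ^ (2 : ℕ) := by
    rw [← Real.rpow_natCast (ω x) 2, ← Real.rpow_add (hpos x hx)]
    norm_num
    congr 1
    ring
  have e3 : ω x ^ (a - 3) = ω x ^ (a - 4) * ω x ^ (1 : ℕ) := by
    rw [← Real.rpow_natCast (ω x) 1, ← Real.rpow_add (hpos x hx)]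
    norm_num
    congr 1
    ring
  simp only [hg4]
  rw [e1, e2, e3]
  linear_combination (a * ω x ^ (a - 4)) * heqx
end
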